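/- Let S be a numerical semigroup with m(S) − ν(S) ≥ 3 and n_L = 1. Then either n_{L−1} ≥ 4, or else n_{L−1} = 3, m(S) − ν(S) = 3 and ρ ≤ m(S) − 2. -/

import Mathlib

/-- A numerical semigroup: an additive submonoid of `ℕ` (containing `0`, closed under
addition) whose complement in `ℕ` is finite. -/
structure NumericalSemigroup where
  carrier : Set ℕ
  zero_mem : 0 ∈ carrier
  add_mem : ∀ ⦃a b : ℕ⦄, a ∈ carrier → b ∈ carrier → a + b ∈ carrier
  cofinite : (carrierᶜ : Set ℕ).Finite

namespace NumericalSemigroup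

/-- The multiplicity `m(S)`: the smallest positive element of `S`. -/
noncomputable def mult (S : NumericalSemigroup) : ℕ :=
  sInf {s : ℕ | s ∈ S.carrier ∧ 0 < s}

/-- The embedding dimension `ν(S)`: the cardinality of the (unique) minimal system of
generators of `S`, i.e. the least cardinality of a generating set. -/
noncomputable def embdim (S : NumericalSemigroup) : ℕ :=
  sInf {n : ℕ | ∃ G : Finset ℕ,
    S.carrier = (AddSubmonoid.closure (G : Set ℕ) : Set ℕ) ∧ G.card = n}

/-- The Frobenius number `f(S)`: the largest integer not belonging to `S`. -/
noncomputable def frob (S : NumericalSemigroup) : ℤ :=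
  sSup {x : ℤ | ∀ s ∈ S.carrier, (s : ℤ) ≠ x}

/-- `n(S)`: the number of elements of `S` smaller than the Frobenius number. -/
noncomputable def small (S : NumericalSemigroup) : ℕ :=
  {s : ℕ | s ∈ S.carrier ∧ (s : ℤ) < S.frob}.ncard

/-- The type `t(S)`: the number of pseudo-Frobenius numbers of `S`, i.e. integers
`x ∉ S` such that `x + s ∈ S` for every nonzero `s ∈ S`. -/
noncomputable def typ (S : NumericalSemigroup) : ℕ :=
  {x : ℤ | (∀ s ∈ S.carrier, (s : ℤ) ≠ x) ∧
    ∀ s ∈ S.carrier, 0 < s → ∃ u ∈ S.carrier, (u : ℤ) = x + s}.ncard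

/-- The `k`-th interval `I_k = [k·m, (k+1)·m - 1]` (for a given `m`). -/
def interval (m k : ℕ) : Set ℕ := Set.Ico (k * m) ((k + 1) * m)

/-- `n_k`: the number of elements of `S ∩ I_k` smaller than the Frobenius number. -/
noncomputable def nk (S : NumericalSemigroup) (k : ℕ) : ℕ :=
  {s : ℕ | s ∈ S.carrier ∩ interval S.mult k ∧ (s : ℤ) < S.frob}.ncard

/-- `L = ⌊f(S)/m(S)⌋`. -/
noncomputable def Lindex (S : NumericalSemigroup) : ℤ := S.frob / (S.mult : ℤ)

/-- `ρ = f(S) + 1 - L·m(S)`. -/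
noncomputable def rho (S : NumericalSemigroup) : ℤ :=
  S.frob + 1 - S.Lindex * (S.mult : ℤ)

/-- The Apéry set `Ap(S) = {w ∈ S : w - m(S) ∉ S}`. -/
def apery (S : NumericalSemigroup) : Set ℕ :=
  {w : ℕ | w ∈ S.carrier ∧ ∀ u ∈ S.carrier, u + S.mult ≠ w}

theorem apery_finite (S : NumericalSemigroup) : S.apery.Finite := by
  apply Set.Finite.subset ((Set.finite_Iio S.mult).union (S.cofinite.image (· + S.mult)))
  intro x hx
  by_cases h : x < S.mult
  · exact Or.inl h
  · refine Or.inr ⟨x - S.mult, fun hmem => hx.2 _ hmem (by omega), ?_⟩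
    show x - S.mult + S.mult = x
    omega

/-- `w j`: the `(j+1)`-st smallest element of the Apéry set, so that
`Ap(S) = {w 0 < w 1 < ... < w (m-1)}` with `w 0 = 0`. -/
noncomputable def w (S : NumericalSemigroup) (j : ℕ) : ℕ :=
  (S.apery_finite.toFinset.sort (· ≤ ·)).getD j 0

/-- `ε_j`: the number of `k ∈ {0, ..., L-1}` such that `|I_k ∩ S| = j`. -/
noncomputable def eps (S : NumericalSemigroup) (j : ℕ) : ℕ :=
  {k : ℕ | (k : ℤ) < S.Lindex ∧ (S.carrier ∩ interval S.mult k).ncard = j}.ncard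

/-- `η_j`: the number of `k ∈ ℕ` such that `|I_k ∩ S| = j`. -/
noncomputable def eta (S : NumericalSemigroup) (j : ℕ) : ℕ :=
  {k : ℕ | (S.carrier ∩ interval S.mult k).ncard = j}.ncard

/-! ### Auxiliary lemmas -/

lemma bound_mem (S : NumericalSemigroup) :
    ∃ N : ℕ, 0 < N ∧ ∀ n, N ≤ n → n ∈ S.carrier := by
  obtain ⟨N, hN⟩ := (S.cofinite.bddAbove : BddAbove (S.carrierᶜ : Set ℕ))
  refine ⟨N + 1, Nat.succ_pos _, fun n hn => ?_⟩
  by_contra hc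
  have : n ≤ N := hN (Set.mem_compl hc)
  omega

lemma mult_spec (S : NumericalSemigroup) : S.mult ∈ S.carrier ∧ 0 < S.mult := by
  obtain ⟨N, hN0, hN⟩ := S.bound_mem
  have hne : {s : ℕ | s ∈ S.carrier ∧ 0 < s}.Nonempty := ⟨N, hN N le_rfl, hN0⟩
  exact Nat.sInf_mem hne

lemma mult_le (S : NumericalSemigroup) {s : ℕ} (hs : s ∈ S.carrier) (h : 0 < s) :
    S.mult ≤ s :=
  Nat.sInf_le (show s ∈ {t : ℕ | t ∈ S.carrier ∧ 0 < t} from ⟨hs, h⟩)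

lemma add_mul_mem (S : NumericalSemigroup) {x y : ℕ} (hx : x ∈ S.carrier)
    (hy : y ∈ S.carrier) (k : ℕ) : x + k * y ∈ S.carrier := by
  induction k with
  | zero => simpa using hx
  | succ n ih => simpa [Nat.succ_mul, ← Nat.add_assoc] using S.add_mem ih hy

lemma mul_mem' (S : NumericalSemigroup) {y : ℕ} (hy : y ∈ S.carrier) (k : ℕ) :
    k * y ∈ S.carrier := by
  simpa using S.add_mul_mem S.zero_mem hy k

lemma frob_gaps_bddAbove (S : NumericalSemigroup) :
    BddAbove {x : ℤ | ∀ s ∈ S.carrier, (s : ℤ) ≠ x} := by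
  obtain ⟨N, _, hN⟩ := S.bound_mem
  refine ⟨(N : ℤ), fun x hx => ?_⟩
  by_contra hc
  push_neg at hc
  have hx0 : 0 ≤ x := le_of_lt (lt_of_le_of_lt (Int.natCast_nonneg N) hc)
  have : x.toNat ∈ S.carrier := hN _ (by omega)
  exact hx x.toNat this (by omega)

lemma frob_not_mem (S : NumericalSemigroup) {s : ℕ} (hs : s ∈ S.carrier) :
    (s : ℤ) ≠ S.frob := by
  have h := Int.csSup_mem (s := {x : ℤ | ∀ s ∈ S.carrier, (s : ℤ) ≠ x})
    ⟨-1, fun u _ => by omega⟩ S.frob_gaps_bddAbove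
  exact h s hs

lemma le_frob (S : NumericalSemigroup) {x : ℤ} (hx : ∀ s ∈ S.carrier, (s : ℤ) ≠ x) :
    x ≤ S.frob := le_csSup S.frob_gaps_bddAbove hx

lemma gt_frob_mem (S : NumericalSemigroup) {n : ℕ} (h : S.frob < (n : ℤ)) :
    n ∈ S.carrier := by
  by_contra hc
  have : (n : ℤ) ≤ S.frob := S.le_frob (fun s hs he => by
    have : s = n := by exact_mod_cast he
    exact hc (this ▸ hs))
  omega

lemma list_sum_mem' (S : NumericalSemigroup) {l : List ℕ}
    (h : ∀ y ∈ l, y ∈ S.carrier) : l.sum ∈ S.carrier := by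
  induction l with
  | nil => simpa using S.zero_mem
  | cons a t ih =>
      simpa using S.add_mem (h a (List.mem_cons_self)) (ih fun y hy => h y (List.mem_cons_of_mem a hy))

lemma indec_mem_gen (S : NumericalSemigroup) {G : Finset ℕ}
    (hG : S.carrier = (AddSubmonoid.closure (G : Set ℕ) : Set ℕ)) {x : ℕ}
    (hx : x ∈ S.carrier) (h0 : x ≠ 0)
    (hind : ¬∃ a b : ℕ, a ∈ S.carrier ∧ b ∈ S.carrier ∧ 0 < a ∧ 0 < b ∧ a + b = x) :
    x ∈ G := by
  have hGC : (G : Set ℕ) ⊆ S.carrier := by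
    rw [hG]; exact AddSubmonoid.subset_closure
  have hxc : x ∈ AddSubmonoid.closure (G : Set ℕ) := by rw [hG] at hx; exact hx
  obtain ⟨l, hl, hsum⟩ := AddSubmonoid.exists_list_of_mem_closure hxc
  clear hxc hx
  have key : ∀ l : List ℕ, (∀ y ∈ l, y ∈ (G : Set ℕ)) → l.sum ≠ 0 →
      (¬∃ a b : ℕ, a ∈ S.carrier ∧ b ∈ S.carrier ∧ 0 < a ∧ 0 < b ∧ a + b = l.sum) →
      l.sum ∈ G := by
    intro l
    induction l with
    | nil => intro _ h0 _; simp at h0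
    | cons a t ih =>
        intro hl h0 hind
        have hts : t.sum ∈ S.carrier :=
          S.list_sum_mem' (fun y hy => hGC (hl y (List.mem_cons_of_mem a hy)))
        have ha : a ∈ G := by exact_mod_cast hl a (List.mem_cons_self)
        rcases Nat.eq_zero_or_pos a with ha0 | hapos
        · have := ih (fun y hy => hl y (List.mem_cons_of_mem a hy))
            (by simpa [ha0] using h0)
            (by simpa [ha0] using hind)
          simpa [ha0] using this
        · rcases Nat.eq_zero_or_pos t.sum with ht0 | htpos
          · simpa [ht0] using ha
          · exact absurd ⟨a, t.sum, hGC ha, hts, hapos, htpos, by simp⟩ hind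
  have := key l hl (by rw [hsum]; exact h0) (by rw [hsum]; exact hind)
  rwa [hsum] at this

lemma embdim_spec (S : NumericalSemigroup) :
    ∃ G : Finset ℕ, S.carrier = (AddSubmonoid.closure (G : Set ℕ) : Set ℕ) ∧
      G.card = S.embdim := by
  obtain ⟨N, hN0, hN⟩ := S.bound_mem
  have hfin : (S.carrier ∩ Set.Icc 1 (2 * N)).Finite :=
    (Set.finite_Icc 1 (2 * N)).subset Set.inter_subset_right
  set G : Finset ℕ := hfin.toFinset with hGdef
  have hGC : (G : Set ℕ) ⊆ S.carrier := by
    intro x hx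
    simp only [hGdef, Set.Finite.coe_toFinset] at hx
    exact hx.1
  have hgen : S.carrier = (AddSubmonoid.closure (G : Set ℕ) : Set ℕ) := by
    apply Set.eq_of_subset_of_subset
    · intro x hx
      induction x using Nat.strong_induction_on with
      | _ x ih =>
        rcases Nat.eq_zero_or_pos x with h0 | hpos
        · simpa [h0] using (AddSubmonoid.closure (G : Set ℕ)).zero_mem
        · by_cases hle : x ≤ 2 * N
          · exact AddSubmonoid.subset_closure (by
              simp only [hGdef, Set.Finite.coe_toFinset]
              exact ⟨hx, hpos, hle⟩)
          · have h1 : x - N ∈ S.carrier := hN _ (by omega)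
            have h2 : x - N ∈ (AddSubmonoid.closure (G : Set ℕ) : Set ℕ) :=
              ih (x - N) (by omega) h1
            have h3 : N ∈ AddSubmonoid.closure (G : Set ℕ) :=
              AddSubmonoid.subset_closure (by
                simp only [hGdef, Set.Finite.coe_toFinset]
                exact ⟨hN N le_rfl, hN0, by omega⟩)
            have := AddSubmonoid.add_mem _ h2 h3
            simpa [Nat.sub_add_cancel (by omega : N ≤ x)] using this
    · intro x hx
      refine AddSubmonoid.closure_induction ?_ ?_ ?_ hx
      · exact fun y hy => hGC hy
      · exact S.zero_mem
      · exact fun a b _ _ ha hb => S.add_mem ha hb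
  have hne : {n : ℕ | ∃ G : Finset ℕ,
      S.carrier = (AddSubmonoid.closure (G : Set ℕ) : Set ℕ) ∧ G.card = n}.Nonempty :=
    ⟨G.card, G, hgen, rfl⟩
  obtain ⟨G₀, hG₀, hc⟩ := Nat.sInf_mem hne
  exact ⟨G₀, hG₀, hc⟩

lemma subset_singleton_of_ncard_le_one {s : Set ℕ} (hs : s.Finite) (h : s.ncard ≤ 1) :
    ∃ a, s ⊆ {a} := by
  interval_cases hc : s.ncard
  · exact ⟨0, by rw [(Set.ncard_eq_zero hs).mp hc]; exact Set.empty_subset _⟩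
  · obtain ⟨a, ha⟩ := Set.ncard_eq_one.mp hc
    exact ⟨a, ha.le⟩

lemma subset_pair_of_ncard_le_two {s : Set ℕ} (hs : s.Finite) (h : s.ncard ≤ 2) :
    ∃ a b, s ⊆ {a, b} := by
  interval_cases hc : s.ncard
  · exact ⟨0, 0, by rw [(Set.ncard_eq_zero hs).mp hc]; exact Set.empty_subset _⟩
  · obtain ⟨a, ha⟩ := Set.ncard_eq_one.mp hc
    exact ⟨a, a, by rw [ha]; simp⟩
  · obtain ⟨a, b, _, hab⟩ := Set.ncard_eq_two.mp hc
    exact ⟨a, b, hab.le⟩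

/-- If `m(S) - ν(S) ≥ 3` and `n_L = 1`, then either `n_{L-1} ≥ 4`, or
`n_{L-1} = 3`, `m(S) - ν(S) = 3` and `ρ ≤ m(S) - 2`. -/
theorem nL_eq_one_cases (S : NumericalSemigroup)
    (h : 3 ≤ S.mult - S.embdim) (h1 : S.nk S.Lindex.toNat = 1) :
    4 ≤ S.nk (S.Lindex - 1).toNat ∨
      (S.nk (S.Lindex - 1).toNat = 3 ∧ S.mult - S.embdim = 3 ∧
        S.rho ≤ (S.mult : ℤ) - 2) := by
  classical
  obtain ⟨hm_mem, hm_pos⟩ := S.mult_spec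
  obtain ⟨G₀, hG₀, hG₀card⟩ := S.embdim_spec
  -- ν ≥ 1
  have hν1 : 1 ≤ S.embdim := by
    rcases Nat.eq_zero_or_pos S.embdim with h0 | h'
    · exfalso
      rw [h0, Finset.card_eq_zero] at hG₀card
      obtain ⟨N, hN0, hN⟩ := S.bound_mem
      have hNmem : N ∈ S.carrier := hN N le_rfl
      rw [hG₀, hG₀card] at hNmem
      simp only [Finset.coe_empty, AddSubmonoid.closure_empty, AddSubmonoid.coe_bot,
        Set.mem_singleton_iff] at hNmem
      omega
    · exact h'
  have hm4 : 4 ≤ S.mult := by omega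
  -- Frobenius basics
  have h1notmem : (1 : ℕ) ∉ S.carrier := fun hc => by
    have := S.mult_le hc one_pos; omega
  have hf1 : (1 : ℤ) ≤ S.frob := S.le_frob (fun s hs he => by
    have hs1 : s = 1 := by exact_mod_cast he
    exact h1notmem (hs1 ▸ hs))
  set F := S.frob.toNat with hFdef
  have hFcast : (F : ℤ) = S.frob := Int.toNat_of_nonneg (by omega)
  have hFnot : F ∉ S.carrier := fun hc => S.frob_not_mem hc (by rw [hFcast])
  have hFgt : ∀ n : ℕ, F < n → n ∈ S.carrier := fun n hn => S.gt_frob_mem (by omega)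
  -- division
  set L := F / S.mult with hL
  set LM := S.mult * L with hLM
  have hdm : LM + F % S.mult = F := by
    have := Nat.div_add_mod F S.mult
    rw [← hL] at this
    rw [hLM]
    exact this
  have hmod : F % S.mult < S.mult := Nat.mod_lt _ hm_pos
  have hLm_mem : LM ∈ S.carrier := by
    rw [hLM, Nat.mul_comm]; exact S.mul_mem' hm_mem L
  have hLM_le : LM ≤ F := by omega
  have hLM_lt : LM < F := by
    rcases Nat.lt_or_ge LM F with h' | h'
    · exact h'
    · exfalso
      have he : LM = F := by omega
      exact hFnot (he ▸ hLm_mem)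
  have hF_lt : F < LM + S.mult := by omega
  have hLindex : S.Lindex = (L : ℤ) := by
    simp only [Lindex]
    rw [← hFcast, hL]
    norm_cast -- deprecated ok
  have hIdxL : S.Lindex.toNat = L := by rw [hLindex]; exact Int.toNat_natCast L
  have hIdxL1 : (S.Lindex - 1).toNat = L - 1 := by rw [hLindex]; omega
  -- the interval I_L
  have hIL : {s : ℕ | s ∈ S.carrier ∩ interval S.mult L ∧ (s : ℤ) < S.frob}
      = {x : ℕ | x ∈ S.carrier ∧ LM ≤ x ∧ x < F} := by
    have e0 : L * S.mult = LM := by rw [hLM, Nat.mul_comm]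
    have e1 : (L + 1) * S.mult = LM + S.mult := by rw [Nat.add_mul, Nat.one_mul, e0]
    ext x
    simp only [interval, Set.mem_setOf_eq, Set.mem_inter_iff, Set.mem_Ico, ← hFcast,
      Nat.cast_lt]
    constructor
    · rintro ⟨⟨hx, hx1, hx2⟩, hx3⟩
      exact ⟨hx, by omega, hx3⟩
    · rintro ⟨hx, hx1, hx2⟩
      exact ⟨⟨hx, by omega, by omega⟩, hx2⟩
  simp only [nk] at h1
  rw [hIdxL, hIL] at h1
  obtain ⟨aL, haL⟩ := Set.ncard_eq_one.mp h1
  have haLM : aL = LM := by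
    have hmem : LM ∈ {x : ℕ | x ∈ S.carrier ∧ LM ≤ x ∧ x < F} := ⟨hLm_mem, le_rfl, hLM_lt⟩
    rw [haL] at hmem
    simpa using hmem.symm
  have hzone : ∀ s, s ∈ S.carrier → LM < s → F ≤ s := by
    intro s hs hls
    by_contra hc
    push_neg at hc
    have hmem : s ∈ {x : ℕ | x ∈ S.carrier ∧ LM ≤ x ∧ x < F} := ⟨hs, by omega, hc⟩
    rw [haL, haLM] at hmem
    simp only [Set.mem_singleton_iff] at hmem
    omega
  -- the set T
  set T := {x : ℕ | x ∈ S.carrier ∧ F < x + S.mult ∧ x < F} with hT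
  have hTfin : T.Finite := (Set.finite_Ico 0 F).subset (fun x hx => by
    rw [hT] at hx
    exact Set.mem_Ico.mpr ⟨Nat.zero_le _, hx.2.2⟩)
  have hLmT : LM ∈ T := by rw [hT]; exact ⟨hLm_mem, by omega, hLM_lt⟩
  have hTpos : 1 ≤ T.ncard := (Set.ncard_pos hTfin).mpr ⟨LM, hLmT⟩
  -- apery machinery
  set A := {w : ℕ | w ∈ S.apery ∧ 0 < w} with hA
  set Dec := {x : ℕ | ∃ a b : ℕ, a ∈ S.carrier ∧ b ∈ S.carrier ∧ 0 < a ∧ 0 < b ∧ a + b = x}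
    with hDec
  set DA := A ∩ Dec with hDA
  have hAfin : A.Finite := S.apery_finite.subset fun x hx => hx.1
  have hDAfin : DA.Finite := hAfin.subset Set.inter_subset_left
  -- |A| ≥ m - 1
  have hAcard : S.mult - 1 ≤ A.ncard := by
    have hmaps : ∀ r ∈ Set.Ico 1 S.mult,
        sInf {s : ℕ | s ∈ S.carrier ∧ s % S.mult = r} ∈ A := by
      intro r hr
      rw [Set.mem_Ico] at hr
      have hcand : r + (F + 1) * S.mult ∈ {s : ℕ | s ∈ S.carrier ∧ s % S.mult = r} := by
        constructor
        · apply hFgt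
          have : F + 1 ≤ (F + 1) * S.mult := Nat.le_mul_of_pos_right _ hm_pos
          omega
        · rw [Nat.add_mul_mod_self_right]
          exact Nat.mod_eq_of_lt hr.2
      have hne : {s : ℕ | s ∈ S.carrier ∧ s % S.mult = r}.Nonempty := ⟨_, hcand⟩
      obtain ⟨hwC, hwmod⟩ := Nat.sInf_mem hne
      rw [hA]
      refine ⟨⟨hwC, fun u hu he => ?_⟩, ?_⟩
      · have humod : u % S.mult = r := by
          rw [← hwmod, ← he, Nat.add_mod_right]
        have hle := Nat.sInf_le (show u ∈ {s : ℕ | s ∈ S.carrier ∧ s % S.mult = r}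
          from ⟨hu, humod⟩)
        omega
      · rcases Nat.eq_zero_or_pos (sInf {s : ℕ | s ∈ S.carrier ∧ s % S.mult = r}) with h0 | h'
        · rw [h0] at hwmod
          simp at hwmod
          omega
        · exact h'
    have hinj : Set.InjOn (fun r => sInf {s : ℕ | s ∈ S.carrier ∧ s % S.mult = r})
        (Set.Ico 1 S.mult) := by
      intro r1 hr1 r2 hr2 he
      have h1' := Nat.sInf_mem (⟨r1 + (F + 1) * S.mult, by
        constructor
        · apply hFgt
          have : F + 1 ≤ (F + 1) * S.mult := Nat.le_mul_of_pos_right _ hm_pos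
          omega
        · rw [Nat.add_mul_mod_self_right]
          exact Nat.mod_eq_of_lt (Set.mem_Ico.mp hr1).2⟩ :
          {s : ℕ | s ∈ S.carrier ∧ s % S.mult = r1}.Nonempty)
      have h2' := Nat.sInf_mem (⟨r2 + (F + 1) * S.mult, by
        constructor
        · apply hFgt
          have : F + 1 ≤ (F + 1) * S.mult := Nat.le_mul_of_pos_right _ hm_pos
          omega
        · rw [Nat.add_mul_mod_self_right]
          exact Nat.mod_eq_of_lt (Set.mem_Ico.mp hr2).2⟩ :
          {s : ℕ | s ∈ S.carrier ∧ s % S.mult = r2}.Nonempty)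
      simp only at he
      rw [← h1'.2, ← h2'.2, he]
    have hle := Set.ncard_le_ncard_of_injOn _ hmaps hinj hAfin
    rwa [← Finset.coe_Ico, Set.ncard_coe_finset, Nat.card_Ico] at hle
  -- indecomposables are generators
  have hmG : S.mult ∈ G₀ := by
    refine S.indec_mem_gen hG₀ hm_mem (by omega) ?_
    rintro ⟨a, b, ha, hb, ha0, hb0, habs⟩
    have := S.mult_le ha ha0
    have := S.mult_le hb hb0
    omega
  have hmA : S.mult ∉ A := fun hc => hc.1.2 0 S.zero_mem (by simp)
  have hsubG : insert S.mult (A \ Dec) ⊆ (G₀ : Set ℕ) := by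
    intro x hx
    rcases Set.mem_insert_iff.mp hx with rfl | ⟨hxA, hxD⟩
    · exact hmG
    · exact S.indec_mem_gen hG₀ hxA.1.1 (by have := hxA.2; omega) (by
        intro hc
        exact hxD hc)
  have hccalc : (insert S.mult (A \ Dec)).ncard ≤ G₀.card := by
    have := Set.ncard_le_ncard hsubG G₀.finite_toSet
    rwa [Set.ncard_coe_finset] at this
  have hins : (insert S.mult (A \ Dec)).ncard = (A \ Dec).ncard + 1 :=
    Set.ncard_insert_of_notMem (fun hc => hmA hc.1) (hAfin.subset Set.diff_subset)
  have hADeq : A \ Dec = A \ DA := by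
    rw [hDA]; ext x
    simp only [Set.mem_diff, Set.mem_inter_iff]
    tauto
  have hdiffcard : (A \ Dec).ncard = A.ncard - DA.ncard := by
    rw [hADeq]
    exact Set.ncard_diff Set.inter_subset_left hDAfin
  have hDAle : DA.ncard ≤ A.ncard := Set.ncard_le_ncard Set.inter_subset_left hAfin
  have hνbound : S.mult ≤ S.embdim + DA.ncard := by omega
  have hd3 : 3 ≤ DA.ncard := by omega
  -- apery bounds
  have hap_bound : ∀ w ∈ S.apery, w ≤ F + S.mult := by
    intro w hw
    by_contra hc
    push_neg at hc
    have h1' : w - S.mult ∈ S.carrier := hFgt _ (by omega)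
    exact hw.2 _ h1' (by omega)
  have hap_lb : ∀ w ∈ S.apery, 0 < w → S.mult + 1 ≤ w := by
    intro w hw hw0
    have hle := S.mult_le hw.1 hw0
    have hne : w ≠ S.mult := fun he => hw.2 0 S.zero_mem (by simp [he])
    omega
  -- B and the decomposition
  set B := {w : ℕ | w ∈ S.apery ∧ 0 < w ∧ w < F} with hB
  have hBfin : B.Finite := S.apery_finite.subset fun x hx => hx.1
  have hBB : ∀ w ∈ DA, ∃ a b : ℕ, a ∈ B ∧ b ∈ B ∧ a + b = w := by
    intro w hw
    rw [hDA] at hw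
    obtain ⟨⟨hwap, hw0⟩, a, b, ha, hb, ha0, hb0, hab⟩ := hw
    have haap : a ∈ S.apery := ⟨ha, fun u hu he => hwap.2 (u + b) (S.add_mem hu hb) (by omega)⟩
    have hbap : b ∈ S.apery := ⟨hb, fun u hu he => hwap.2 (u + a) (S.add_mem hu ha) (by omega)⟩
    have hwb := hap_bound w hwap
    have hal := hap_lb a haap ha0
    have hbl := hap_lb b hbap hb0
    refine ⟨a, b, ?_, ?_, hab⟩
    · rw [hB]; exact ⟨haap, ha0, by omega⟩
    · rw [hB]; exact ⟨hbap, hb0, by omega⟩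
  -- F ≥ m + 2 and L ≥ 1
  have hDAne : DA.Nonempty := (Set.ncard_pos hDAfin).mp (by omega)
  obtain ⟨w0, hw0DA⟩ := hDAne
  have hFm2 : S.mult + 2 ≤ F := by
    obtain ⟨a0, b0, ha0B, hb0B, -⟩ := hBB w0 hw0DA
    rw [hB] at ha0B
    have := hap_lb a0 ha0B.1 ha0B.2.1
    have := ha0B.2.2
    omega
  have hLne : L ≠ 0 := by
    intro h0
    rw [h0, Nat.mul_zero] at hLM
    omega
  have hL1 : 1 ≤ L := by omega
  -- no two apery elements differ by a multiple of m
  have hshift : ∀ x ∈ S.apery, ∀ y ∈ S.carrier, ∀ j : ℕ, y + j * S.mult = x → j = 0 := by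
    intro x hx y hy j he
    by_contra hj
    have hu : y + (j - 1) * S.mult ∈ S.carrier := S.add_mul_mem hy hm_mem _
    apply hx.2 _ hu
    have hee : (j - 1) * S.mult + S.mult = j * S.mult := by
      have h' : (j - 1 + 1) * S.mult = (j - 1) * S.mult + 1 * S.mult := Nat.add_mul _ 1 _
      rw [show j - 1 + 1 = j from by omega] at h'
      omega
    omega
  -- injection from B into T \ {LM}
  have hpsi : ∀ b ∈ B, b + ((F - b) / S.mult) * S.mult ∈ T \ {LM} := by
    intro b hbB
    rw [hB] at hbB
    obtain ⟨hbap, hb0, hbF⟩ := hbB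
    have hbl := hap_lb b hbap hb0
    have hk := Nat.div_add_mod (F - b) S.mult
    have hkm := Nat.mod_lt (F - b) hm_pos
    have hcomm : S.mult * ((F - b) / S.mult) = ((F - b) / S.mult) * S.mult :=
      Nat.mul_comm _ _
    have hτC : b + ((F - b) / S.mult) * S.mult ∈ S.carrier :=
      S.add_mul_mem hbap.1 hm_mem _
    have hτle : b + ((F - b) / S.mult) * S.mult ≤ F := by omega
    have hτne : b + ((F - b) / S.mult) * S.mult ≠ F := fun he => hFnot (he ▸ hτC)
    have hτgt : F < b + ((F - b) / S.mult) * S.mult + S.mult := by omega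
    constructor
    · rw [hT]; exact ⟨hτC, hτgt, by omega⟩
    · simp only [Set.mem_singleton_iff]
      intro heq
      have hb_eq : b = S.mult * L - ((F - b) / S.mult) * S.mult := by omega
      have hdvd : S.mult ∣ b := by
        rw [hb_eq]
        exact Nat.dvd_sub (Dvd.intro L rfl) (Dvd.intro_left _ rfl)
      obtain ⟨j, hj⟩ := hdvd
      have hj2 : 2 ≤ j := by
        rcases Nat.lt_or_ge j 2 with h' | h'
        · interval_cases j <;> omega
        · exact h'
      have hyC : (j - 1) * S.mult ∈ S.carrier := S.mul_mem' hm_mem _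
      have hmul' : (j - 1 + 1) * S.mult = (j - 1) * S.mult + 1 * S.mult :=
        Nat.add_mul (j - 1) 1 S.mult
      rw [show j - 1 + 1 = j from by omega] at hmul'
      have hcm : S.mult * j = j * S.mult := Nat.mul_comm _ _
      have heq2 : (j - 1) * S.mult + 1 * S.mult = b := by omega
      have := hshift b hbap _ hyC 1 heq2
      omega
  have hinjB : Set.InjOn (fun b => b + ((F - b) / S.mult) * S.mult) B := by
    intro b hbB b' hb'B he
    have he' : b + ((F - b) / S.mult) * S.mult = b' + ((F - b') / S.mult) * S.mult := he
    rw [hB] at hbB hb'B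
    obtain ⟨hbap, hb0, hbF⟩ := hbB
    obtain ⟨hb'ap, hb'0, hb'F⟩ := hb'B
    rcases Nat.le_total ((F - b) / S.mult) ((F - b') / S.mult) with hkk | hkk
    · have hmle := Nat.mul_le_mul_right S.mult hkk
      have hsub := Nat.sub_mul ((F - b') / S.mult) ((F - b) / S.mult) S.mult
      have heq2 : b' + (((F - b') / S.mult) - ((F - b) / S.mult)) * S.mult = b := by
        rw [hsub]; omega
      have h0 := hshift b hbap b' hb'ap.1 _ heq2
      rw [h0] at heq2
      omega
    · have hmle := Nat.mul_le_mul_right S.mult hkk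
      have hsub := Nat.sub_mul ((F - b) / S.mult) ((F - b') / S.mult) S.mult
      have heq2 : b + (((F - b) / S.mult) - ((F - b') / S.mult)) * S.mult = b' := by
        rw [hsub]; omega
      have h0 := hshift b' hb'ap b hbap.1 _ heq2
      rw [h0] at heq2
      omega
  have hBcard : B.ncard ≤ (T \ {LM}).ncard :=
    Set.ncard_le_ncard_of_injOn _ hpsi hinjB hTfin.diff
  have hTdiff : (T \ {LM}).ncard = T.ncard - 1 := by
    rw [Set.ncard_diff (Set.singleton_subset_iff.mpr hLmT) (Set.finite_singleton _),
      Set.ncard_singleton]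
  -- value of n_{L-1}
  have e2 : (L - 1) * S.mult + S.mult = LM := by
    have h' : (L - 1 + 1) * S.mult = (L - 1) * S.mult + 1 * S.mult := Nat.add_mul _ 1 _
    rw [show L - 1 + 1 = L from by omega] at h'
    have hcm : S.mult * L = L * S.mult := Nat.mul_comm _ _
    omega
  have hset2 : {s : ℕ | s ∈ S.carrier ∩ interval S.mult (L - 1) ∧ (s : ℤ) < S.frob}
      = insert ((L - 1) * S.mult) (T \ {LM}) := by
    have e3 : (L - 1 + 1) * S.mult = LM := by
      rw [show L - 1 + 1 = L from by omega, hLM, Nat.mul_comm]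

    ext x
    simp only [interval, Set.mem_setOf_eq, Set.mem_inter_iff, Set.mem_Ico, ← hFcast,
      Nat.cast_lt, Set.mem_insert_iff, Set.mem_diff, Set.mem_singleton_iff, hT]
    constructor
    · rintro ⟨⟨hx, hx1, hx2⟩, hx3⟩
      rcases eq_or_lt_of_le hx1 with he | hlt
      · left; exact he.symm
      · right
        have hxm : x + S.mult ∈ S.carrier := S.add_mem hx hm_mem
        have hgtF : F < x + S.mult := by
          by_contra hc
          push_neg at hc
          have hz := hzone _ hxm (by omega)
          have he' : x + S.mult = F := by omega
          exact hFnot (he' ▸ hxm)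
        exact ⟨⟨hx, hgtF, by omega⟩, by omega⟩
    · rintro (rfl | ⟨⟨hx, hx1, hx2⟩, hxne⟩)
      · refine ⟨⟨S.mul_mem' hm_mem _, le_rfl, by omega⟩, by omega⟩
      · have hxLM : x ≤ LM := by
          by_contra hc
          push_neg at hc
          have := hzone x hx hc
          omega
        exact ⟨⟨hx, by omega, by omega⟩, by omega⟩
  have hnotmem2 : (L - 1) * S.mult ∉ T \ {LM} := by
    rintro ⟨hmem, -⟩
    rw [hT] at hmem
    have := hmem.2.1
    omega
  have hvalue : S.nk (S.Lindex - 1).toNat = T.ncard := by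
    simp only [nk]
    rw [hIdxL1, hset2, Set.ncard_insert_of_notMem hnotmem2 hTfin.diff, hTdiff]
    omega
  -- final case analysis
  by_cases h4 : 4 ≤ T.ncard
  · left; rw [hvalue]; exact h4
  · right
    push_neg at h4
    have hB2 : B.ncard ≤ 2 := by omega
    have ht3 : 3 ≤ T.ncard := by
      by_contra hc
      push_neg at hc
      have hB1 : B.ncard ≤ 1 := by omega
      obtain ⟨b1, hb1⟩ := subset_singleton_of_ncard_le_one hBfin hB1
      have hDAsub1 : DA ⊆ {b1 + b1} := by
        intro w hw
        obtain ⟨a, b, haB, hbB, rfl⟩ := hBB w hw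
        have ha' := hb1 haB
        have hb' := hb1 hbB
        simp only [Set.mem_singleton_iff] at ha' hb' ⊢
        omega
      have := Set.ncard_le_ncard hDAsub1 (Set.finite_singleton _)
      rw [Set.ncard_singleton] at this
      omega
    have ht : T.ncard = 3 := by omega
    obtain ⟨b1, b2, hbpair⟩ := subset_pair_of_ncard_le_two hBfin hB2
    have hDAsub : DA ⊆ {b1 + b1, b1 + b2, b2 + b2} := by
      intro w hw
      obtain ⟨a, b, haB, hbB, rfl⟩ := hBB w hw
      have ha' := hbpair haB
      have hb' := hbpair hbB
      simp only [Set.mem_insert_iff, Set.mem_singleton_iff] at ha' hb' ⊢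
      omega
    have hDA3 : DA.ncard ≤ 3 := by
      have h' := Set.ncard_le_ncard hDAsub (Set.toFinite _)
      have h'' := Set.ncard_insert_le (b1 + b1) ({b1 + b2, b2 + b2} : Set ℕ)
      have h''' := Set.ncard_insert_le (b1 + b2) ({b2 + b2} : Set ℕ)
      rw [Set.ncard_singleton] at h'''
      omega
    refine ⟨by rw [hvalue]; exact ht, by omega, ?_⟩
    -- ρ ≤ m - 2
    have hρ : F + 3 ≤ LM + S.mult := by
      by_contra hc
      push_neg at hc
      have hLMge : S.mult ≤ LM := by
        rw [hLM]; exact Nat.le_mul_of_pos_right _ hL1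
      have hTsub : T ⊆ {LM - 1, LM} := by
        intro x hx
        rw [hT] at hx
        obtain ⟨hxC, hxgt, hxlt⟩ := hx
        have hxle : x ≤ LM := by
          by_contra hc2
          push_neg at hc2
          have := hzone x hxC hc2
          omega
        simp only [Set.mem_insert_iff, Set.mem_singleton_iff]
        omega
      have h' := Set.ncard_le_ncard hTsub (Set.toFinite _)
      have h'' := Set.ncard_insert_le (LM - 1) ({LM} : Set ℕ)
      rw [Set.ncard_singleton] at h''
      omega
    rw [rho, hLindex, ← hFcast]
    have hcast : ((LM : ℕ) : ℤ) = (L : ℤ) * (S.mult : ℤ) := by rw [hLM]; push_cast; ring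
    rw [← hcast]
    omega

end NumericalSemigroup
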